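/- For a finite alphabet Σ, if F has Natarajan dimension N_d, then the growth function of the autoregressive 0-1 loss class satisfies Γ_{L(F^AR)}(n) ≤ (|Σ|²·n·T)^{N_d}, and hence VC(L(F^AR)) ≤ 3·N_d·log₂(2·N_d·|Σ|²·T/(e·ln 2)). -/

import Mathlib

/-- Autoregressive unrolling over a general alphabet `S`. -/
def arListG {S : Type*} (f : List S → S) (x : List S) : ℕ → List S
  | 0 => []
  | T + 1 => arListG f x T ++ [f (x ++ arListG f x T)]

/-- The set of labelings a binary class realizes on `n` points. -/
def labelings {α : Type*} (H : Set (α → Bool)) {n : ℕ} (xs : Fin n → α) :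
    Set (Fin n → Bool) :=
  {v | ∃ h ∈ H, ∀ i, v i = h (xs i)}

/-- Growth function of a binary class. -/
noncomputable def growth {α : Type*} (H : Set (α → Bool)) (n : ℕ) : ℕ :=
  sSup {k | ∃ xs : Fin n → α, k = (labelings H xs).ncard}

/-- `H` shatters the points `xs` (binary). -/
def Shatters {α : Type*} (H : Set (α → Bool)) {n : ℕ} (xs : Fin n → α) : Prop :=
  ∀ v : Fin n → Bool, ∃ h ∈ H, ∀ i, h (xs i) = v i

/-- Natarajan shattering of the points `xs` by a multiclass class `F`. -/
def NShatters {S : Type*} (F : Set (List S → S)) {m : ℕ} (xs : Fin m → List S) : Prop :=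
  ∃ g0 g1 : Fin m → S, (∀ i, g0 i ≠ g1 i) ∧
    ∀ b : Fin m → Bool, ∃ f ∈ F, ∀ i, f (xs i) = if b i then g1 i else g0 i

/-- The Natarajan dimension of `F` is at most `Nd`. -/
def NdimLe {S : Type*} (F : Set (List S → S)) (Nd : ℕ) : Prop :=
  ∀ m (xs : Fin m → List S), NShatters F xs → m ≤ Nd

/-- The autoregressive 0-1 loss class over alphabet `S`. -/
def lossClassG {S : Type*} [DecidableEq S] (F : Set (List S → S)) (T : ℕ) :
    Set (List S × List S → Bool) :=
  {g | ∃ f ∈ F, g = fun p => decide (p.2 ≠ arListG f p.1 T)}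


set_option linter.unusedSectionVars false

theorem arListG_length {S : Type*} (f : List S → S) (x : List S) (T : ℕ) :
    (arListG f x T).length = T := by
  induction T with
  | zero => rfl
  | succ T ih => simp [arListG, ih]

theorem arListG_take {S : Type*} (f : List S → S) (x : List S) {t T : ℕ} (h : t ≤ T) :
    (arListG f x T).take t = arListG f x t := by
  induction T with
  | zero => simp at h; subst h; simp [arListG]
  | succ T ih =>
    rcases Nat.lt_or_ge t (T+1) with h' | h'
    · have ht : t ≤ T := Nat.lt_succ_iff.mp h'
      rw [show arListG f x (T+1) = arListG f x T ++ [f (x ++ arListG f x T)] from rfl,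
        List.take_append_of_le_length (by rw [arListG_length]; exact ht), ih ht]
    · have : t = T + 1 := le_antisymm h h'
      subst this
      rw [List.take_of_length_le (by rw [arListG_length])]

theorem arListG_getElem {S : Type*} (f : List S → S) (x : List S) {t T : ℕ} (h : t < T)
    (h' : t < (arListG f x T).length) :
    (arListG f x T)[t] = f (x ++ arListG f x t) := by
  have e : (arListG f x T).take (t+1) = arListG f x (t+1) := arListG_take f x (by omega)
  rw [List.getElem_take' h' (Nat.lt_succ_self t), List.getElem_of_eq e]
  have e2 : arListG f x (t+1) = arListG f x t ++ [f (x ++ arListG f x t)] := rfl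
  rw [List.getElem_of_eq e2, List.getElem_append_right (by rw [arListG_length])]
  simp [arListG_length]

theorem arListG_eq_iff {S : Type*} (f : List S → S) (x y : List S) (T : ℕ) :
    arListG f x T = y ↔ y = List.ofFn (fun t : Fin T => f (x ++ y.take t)) := by
  constructor
  · rintro rfl
    apply List.ext_getElem (by simp [arListG_length])
    intro i h1 h2
    rw [List.getElem_ofFn]
    rw [arListG_take f x (le_of_lt (by simpa [arListG_length] using h1))]
    exact arListG_getElem f x (by simpa [arListG_length] using h1) h1
  · intro h
    induction T generalizing y with
    | zero => simp at h; subst h; rfl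
    | succ T ih =>
      have hy : y.length = T + 1 := by rw [h]; simp
      have hyt : (y.take T) = List.ofFn (fun t : Fin T => f (x ++ (y.take T).take t)) := by
        apply List.ext_getElem (by simp [hy])
        intro i h1 h2
        have hiT : i < T := by simpa [hy] using h1
        rw [List.getElem_take, List.getElem_ofFn, List.getElem_of_eq h, List.getElem_ofFn]
        congr 2
        rw [List.take_take]
        congr 1
        omega
      have harT : arListG f x T = y.take T := ih _ hyt
      have hlast : f (x ++ y.take T) = y[T]'(by omega) := by
        rw [List.getElem_of_eq h, List.getElem_ofFn]
      rw [show arListG f x (T+1) = arListG f x T ++ [f (x ++ arListG f x T)] from rfl,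
        harT, hlast, ← List.concat_eq_append, List.take_concat_get]
      exact List.take_of_length_le (by omega)


section Vec
variable {S : Type*} [Fintype S] [DecidableEq S]

/-- `V` Natarajan-shatters the index set `I`. -/
def VShat {m : ℕ} (V : Finset (Fin m → S)) (I : Finset (Fin m)) : Prop :=
  ∃ g0 g1 : Fin m → S, (∀ i ∈ I, g0 i ≠ g1 i) ∧
    ∀ b : Fin m → Bool, ∃ v ∈ V, ∀ i ∈ I, v i = if b i then g1 i else g0 i

/-- dimension-0 classes have at most one element. -/
theorem card_le_one_of_dim_zero {m : ℕ} (V : Finset (Fin m → S))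
    (hd : ∀ I, VShat V I → I.card ≤ 0) : V.card ≤ 1 := by
  by_contra hc
  push_neg at hc
  obtain ⟨v, hv, v', hv', hne⟩ := Finset.one_lt_card.mp hc
  obtain ⟨i, hi⟩ := Function.ne_iff.mp hne
  have : VShat V {i} := by
    refine ⟨v, v', by simpa using hi, fun b => ?_⟩
    by_cases hb : b i
    · exact ⟨v', hv', fun j hj => by simp at hj; subst hj; simp [hb]⟩
    · exact ⟨v, hv, fun j hj => by simp at hj; subst hj; simp [hb]⟩
  simpa using hd _ this

theorem natarajan_vec : ∀ (m : ℕ), 1 ≤ m → ∀ (d : ℕ) (V : Finset (Fin m → S)),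
    (∀ I, VShat V I → I.card ≤ d) → V.card ≤ (Fintype.card S ^ 2 * m) ^ d := by
  intro m hm
  induction m, hm using Nat.le_induction with
  | base =>
    intro d V hd
    match d with
    | 0 => simpa using card_le_one_of_dim_zero V hd
    | d + 1 =>
      calc V.card ≤ Fintype.card (Fin 1 → S) := Finset.card_le_univ V
        _ = Fintype.card S := by simp
        _ ≤ Fintype.card S ^ 2 * 1 := by nlinarith [Fintype.card S]
        _ ≤ (Fintype.card S ^ 2 * 1) ^ (d+1) := Nat.le_self_pow (by omega) _
  | succ m hm ih =>
    intro d V hd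
    match d with
    | 0 => simpa using card_le_one_of_dim_zero V hd
    | d + 1 =>
      set y := Fintype.card S ^ 2 with hy
      -- restriction map
      set r : (Fin (m+1) → S) → (Fin m → S) := fun v => v ∘ Fin.castSucc with hr
      set V' : Finset (Fin m → S) := V.image r with hV'
      set emb : Fin m ↪ Fin (m+1) := ⟨Fin.castSucc, Fin.castSucc_injective m⟩ with hemb
      -- dimension of V' is at most d+1
      have hd' : ∀ I, VShat V' I → I.card ≤ d + 1 := by
        intro I ⟨g0, g1, hgne, hpat⟩
        have : VShat V (I.map emb) := by
          refine ⟨Fin.snoc g0 (g0 ⟨0, hm⟩), Fin.snoc g1 (g1 ⟨0, hm⟩), ?_, ?_⟩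
          · intro j hj
            simp only [Finset.mem_map] at hj
            obtain ⟨i, hi, rfl⟩ := hj
            simp only [hemb, Function.Embedding.coeFn_mk]
            simpa [Fin.snoc_castSucc] using hgne i hi
          · intro b
            obtain ⟨w, hw, hwp⟩ := hpat (b ∘ Fin.castSucc)
            obtain ⟨v, hv, rfl⟩ := Finset.mem_image.mp hw
            refine ⟨v, hv, ?_⟩
            intro j hj
            simp only [Finset.mem_map] at hj
            obtain ⟨i, hi, rfl⟩ := hj
            simp only [hemb, Function.Embedding.coeFn_mk]
            have := hwp i hi
            simpa [Fin.snoc_castSucc, hr] using this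
        simpa using hd _ this
      -- the subclasses for pairs
      have key : ∀ p : S × S, p ∈ (Finset.univ : Finset S).offDiag →
          ∀ I, VShat (V'.filter (fun w => Fin.snoc w p.1 ∈ V ∧ Fin.snoc w p.2 ∈ V)) I →
            I.card ≤ d := by
        intro p hp I ⟨g0, g1, hgne, hpat⟩
        have hpne : p.1 ≠ p.2 := (Finset.mem_offDiag.mp hp).2.2
        have hshat : VShat V (insert (Fin.last m) (I.map emb)) := by
          refine ⟨Fin.snoc g0 p.1, Fin.snoc g1 p.2, ?_, ?_⟩
          · intro j hj
            rcases Finset.mem_insert.mp hj with rfl | hj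
            · simpa [Fin.snoc_last] using hpne
            · obtain ⟨i, hi, rfl⟩ := Finset.mem_map.mp hj
              simp only [hemb, Function.Embedding.coeFn_mk]
              simpa [Fin.snoc_castSucc] using hgne i hi
          · intro b
            obtain ⟨w, hw, hwp⟩ := hpat (b ∘ Fin.castSucc)
            rw [Finset.mem_filter] at hw
            obtain ⟨hw1, hw2, hw3⟩ := hw
            refine ⟨Fin.snoc w (if b (Fin.last m) then p.2 else p.1), ?_, ?_⟩
            · by_cases hb : b (Fin.last m) <;> simp [hb, hw2, hw3]
            · intro j hj
              rcases Finset.mem_insert.mp hj with rfl | hj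
              · by_cases hb : b (Fin.last m) <;> simp [hb, Fin.snoc_last]
              · obtain ⟨i, hi, rfl⟩ := Finset.mem_map.mp hj
                simp only [hemb, Function.Embedding.coeFn_mk]
                have := hwp i hi
                simpa [Fin.snoc_castSucc] using this
        have hcard := hd _ hshat
        rw [Finset.card_insert_of_notMem (by
          simp only [Finset.mem_map]
          rintro ⟨i, hi, hEq⟩
          exact absurd hEq (by simp only [hemb, Function.Embedding.coeFn_mk]; exact (Fin.castSucc_lt_last i).ne))] at hcard
        simpa using hcard
      -- counting
      have hVfib : V.card = ∑ w ∈ V', (V.filter (fun v => r v = w)).card :=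
        Finset.card_eq_sum_card_fiberwise (fun v hv => Finset.mem_image_of_mem r hv)
      have hsnoc_self : ∀ v : Fin (m+1) → S, Fin.snoc (r v) (v (Fin.last m)) = v :=
        fun v => Fin.snoc_init_self v
      have fiber_eq : ∀ w : Fin m → S, (V.filter (fun v => r v = w)) =
          (Finset.univ.filter (fun c : S => Fin.snoc w c ∈ V)).image (fun c => Fin.snoc w c) := by
        intro w
        ext v
        simp only [Finset.mem_filter, Finset.mem_image, Finset.mem_univ, true_and]
        constructor
        · rintro ⟨hv, rfl⟩
          exact ⟨v (Fin.last m), by rwa [hsnoc_self v], hsnoc_self v⟩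
        · rintro ⟨c, hc, rfl⟩
          refine ⟨hc, ?_⟩
          funext i
          simp [hr, Fin.snoc_castSucc]
      have hsnoc_inj : ∀ w : Fin m → S, Function.Injective (fun c : S => (Fin.snoc w c : Fin (m+1) → S)) := by
        intro w
        intro c c' hcc
        have := congrFun hcc (Fin.last m)
        simpa [Fin.snoc_last] using this
      have fiber_card : ∀ w : Fin m → S, (V.filter (fun v => r v = w)).card =
          (Finset.univ.filter (fun c : S => Fin.snoc w c ∈ V)).card := by
        intro w
        rw [fiber_eq w, Finset.card_image_of_injective _ (hsnoc_inj w)]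
      set P : (Fin m → S) → Finset (S × S) := fun w =>
        (Finset.univ.offDiag).filter (fun p : S × S => Fin.snoc w p.1 ∈ V ∧ Fin.snoc w p.2 ∈ V)
        with hP
      have hEle : ∀ w : Fin m → S,
          (Finset.univ.filter (fun c : S => Fin.snoc w c ∈ V)).card ≤ 1 + (P w).card := by
        intro w
        set E := Finset.univ.filter (fun c : S => Fin.snoc w c ∈ V) with hE
        have hsub : E.offDiag ⊆ P w := by
          intro p hp
          rw [Finset.mem_offDiag] at hp
          obtain ⟨h1, h2, h3⟩ := hp
          rw [hE, Finset.mem_filter] at h1 h2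
          rw [hP, Finset.mem_filter, Finset.mem_offDiag]
          exact ⟨⟨Finset.mem_univ _, Finset.mem_univ _, h3⟩, h1.2, h2.2⟩
        have hoff := Finset.card_le_card hsub
        rw [Finset.offDiag_card] at hoff
        rcases Nat.eq_zero_or_pos E.card with h0 | h1
        · omega
        · have : E.card * E.card - E.card = E.card * (E.card - 1) := by
            rw [Nat.mul_sub, Nat.mul_one]
          rw [this] at hoff
          have h2 : E.card - 1 ≤ E.card * (E.card - 1) := Nat.le_mul_of_pos_left _ h1
          omega
      have step1 : V.card ≤ V'.card + ∑ w ∈ V', (P w).card := by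
        rw [hVfib]
        calc ∑ w ∈ V', (V.filter (fun v => r v = w)).card
            ≤ ∑ w ∈ V', (1 + (P w).card) := by
              refine Finset.sum_le_sum fun w _ => ?_
              rw [fiber_card w]; exact hEle w
          _ = V'.card + ∑ w ∈ V', (P w).card := by
              rw [Finset.sum_add_distrib, Finset.sum_const, smul_eq_mul, mul_one]
      have swap : ∑ w ∈ V', (P w).card =
          ∑ p ∈ (Finset.univ : Finset S).offDiag,
            (V'.filter (fun w => Fin.snoc w p.1 ∈ V ∧ Fin.snoc w p.2 ∈ V)).card := by
        simp only [hP, Finset.card_filter]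
        exact Finset.sum_comm
      have step2 : ∑ w ∈ V', (P w).card ≤ y * (y * m) ^ d := by
        rw [swap]
        calc ∑ p ∈ (Finset.univ : Finset S).offDiag,
              (V'.filter (fun w => Fin.snoc w p.1 ∈ V ∧ Fin.snoc w p.2 ∈ V)).card
            ≤ ∑ _p ∈ (Finset.univ : Finset S).offDiag, (y * m) ^ d :=
              Finset.sum_le_sum fun p hp => ih d _ (key p hp)
          _ = (Finset.univ : Finset S).offDiag.card * (y * m) ^ d := by
              rw [Finset.sum_const, smul_eq_mul]
          _ ≤ y * (y * m) ^ d := by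
              refine Nat.mul_le_mul_right _ ?_
              rw [Finset.offDiag_card, Finset.card_univ, hy]
              calc Fintype.card S * Fintype.card S - Fintype.card S
                  ≤ Fintype.card S * Fintype.card S := Nat.sub_le _ _
                _ = Fintype.card S ^ 2 := (sq (Fintype.card S)).symm
      have step3 : V'.card ≤ (y * m) ^ (d + 1) := ih (d+1) V' hd'
      calc V.card ≤ (y * m) ^ (d+1) + y * (y * m) ^ d := by omega
        _ = (y * m) ^ d * (y * (m + 1)) := by ring
        _ ≤ (y * (m+1)) ^ d * (y * (m + 1)) :=
            Nat.mul_le_mul_right _ (Nat.pow_le_pow_left (by nlinarith) d)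
        _ = (y * (m + 1)) ^ (d + 1) := (pow_succ _ _).symm

end Vec

section Aux

variable {S : Type*} [Fintype S] [DecidableEq S]

/-- Behaviors of `F` on `M` points are few (Natarajan's lemma). -/
theorem behaviors_card_le {M Nd : ℕ} (hM : 1 ≤ M) (F : Set (List S → S))
    (hNdim : NdimLe F Nd) (pts : Fin M → List S) :
    {v : Fin M → S | ∃ f ∈ F, ∀ j, v j = f (pts j)}.ncard ≤ (Fintype.card S ^ 2 * M) ^ Nd := by
  classical
  set Vset := {v : Fin M → S | ∃ f ∈ F, ∀ j, v j = f (pts j)} with hVset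
  have hfin : Vset.Finite := Set.toFinite _
  rw [Set.ncard_eq_toFinset_card _ hfin]
  apply natarajan_vec M hM Nd
  intro I ⟨g0, g1, hgne, hpat⟩
  set e := I.equivFin with he
  have hmem : ∀ k : Fin I.card, ((e.symm k : { x // x ∈ I }) : Fin M) ∈ I := fun k => (e.symm k).2
  have : NShatters F (fun k : Fin I.card => pts ((e.symm k : { x // x ∈ I }) : Fin M)) := by
    refine ⟨fun k => g0 (e.symm k), fun k => g1 (e.symm k), fun k => hgne _ (hmem k), ?_⟩
    intro b
    obtain ⟨v, hv, hvp⟩ := hpat (fun j => if h : j ∈ I then b (e ⟨j, h⟩) else false)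
    rw [Set.Finite.mem_toFinset] at hv
    obtain ⟨f, hf, hvf⟩ := hv
    refine ⟨f, hf, ?_⟩
    intro k
    rw [← hvf, hvp _ (hmem k)]
    have hk : (⟨((e.symm k : { x // x ∈ I }) : Fin M), hmem k⟩ : { x // x ∈ I }) = e.symm k :=
      Subtype.ext rfl
    simp only [dif_pos (hmem k), hk, e.apply_symm_apply]
  exact hNdim _ _ this

/-- The labelings of the loss class factor through behaviors of `F`. -/
theorem labelings_card_le {T Nd n : ℕ} (hT : 1 ≤ T) (hn : 1 ≤ n)
    (F : Set (List S → S)) (hNdim : NdimLe F Nd) (zs : Fin n → List S × List S) :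
    (labelings (lossClassG F T) zs).ncard ≤ (Fintype.card S ^ 2 * n * T) ^ Nd := by
  classical
  set e := (finProdFinEquiv : Fin n × Fin T ≃ Fin (n * T)) with he
  set pts : Fin (n * T) → List S :=
    fun j => (zs (e.symm j).1).1 ++ ((zs (e.symm j).1).2.take ((e.symm j).2 : ℕ)) with hpts
  set Vset := {v : Fin (n * T) → S | ∃ f ∈ F, ∀ j, v j = f (pts j)} with hVset
  set Φ : (Fin (n * T) → S) → (Fin n → Bool) :=
    fun w i => decide ((zs i).2 ≠ List.ofFn (fun t : Fin T => w (e (i, t)))) with hΦ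
  have hsub : labelings (lossClassG F T) zs ⊆ Φ '' Vset := by
    rintro v ⟨g, ⟨f, hf, rfl⟩, hvg⟩
    refine ⟨fun j => f (pts j), ⟨f, hf, fun j => rfl⟩, ?_⟩
    funext i
    rw [hvg i]
    show decide ((zs i).2 ≠ List.ofFn fun t : Fin T => f (pts (e (i, t))))
        = decide ((zs i).2 ≠ arListG f (zs i).1 T)
    have hp : ∀ t : Fin T, pts (e (i, t)) = (zs i).1 ++ (zs i).2.take (t : ℕ) := by
      intro t
      rw [hpts]
      simp only [e.symm_apply_apply]
    apply decide_eq_decide.mpr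
    rw [not_iff_not]
    have hofn : (List.ofFn fun t : Fin T => f (pts (e (i, t))))
        = List.ofFn (fun t : Fin T => f ((zs i).1 ++ (zs i).2.take (t : ℕ))) := by
      congr 1
      funext t
      rw [hp t]
    rw [hofn]
    have h := arListG_eq_iff f (zs i).1 (zs i).2 T
    exact ⟨fun hEq => (h.mpr hEq).symm, fun hEq => h.mp hEq.symm⟩
  have hnT : 1 ≤ n * T := Nat.mul_pos hn hT
  calc (labelings (lossClassG F T) zs).ncard
      ≤ (Φ '' Vset).ncard := Set.ncard_le_ncard hsub (Set.toFinite _)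
    _ ≤ Vset.ncard := Set.ncard_image_le (Set.toFinite _)
    _ ≤ (Fintype.card S ^ 2 * (n * T)) ^ Nd := behaviors_card_le hnT F hNdim pts
    _ = (Fintype.card S ^ 2 * n * T) ^ Nd := by rw [mul_assoc]

end Aux

/-- for a finite alphabet `Σ` and Natarajan dimension `N_d`,
`Γ_{L(F^AR)}(n) ≤ (|Σ|²·n·T)^{N_d}` and hence
`VC(L(F^AR)) ≤ 3·N_d·log₂(2·N_d·|Σ|²·T/(e·ln 2))`. -/
theorem natarajan_growth_and_vc_bound
    (S : Type*) [Fintype S] [DecidableEq S]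
    (T Nd n : ℕ) (hT : 1 ≤ T) (hNd : 1 ≤ Nd) (hn : 1 ≤ n)
    (F : Set (List S → S)) (hNdim : NdimLe F Nd) :
    growth (lossClassG F T) n ≤ (Fintype.card S ^ 2 * n * T) ^ Nd ∧
    ∀ m (zs : Fin m → List S × List S), Shatters (lossClassG F T) zs →
      (m : ℝ) ≤ 3 * Nd * Real.logb 2
        (2 * Nd * (Fintype.card S : ℝ) ^ 2 * T / (Real.exp 1 * Real.log 2)) := by
  constructor
  · -- growth bound
    apply csSup_le'
    rintro k ⟨zs, rfl⟩
    exact labelings_card_le hT hn F hNdim zs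
  · intro m zs hshat
    -- the class is nonempty, hence S is nonempty
    obtain ⟨g, hg, -⟩ := hshat (fun _ => true)
    obtain ⟨f, hf, -⟩ := hg
    have hSne : Nonempty S := ⟨f []⟩
    have hcS : 1 ≤ Fintype.card S := Fintype.card_pos_iff.mpr hSne
    -- real abbreviations
    set c : ℝ := (Fintype.card S : ℝ) with hc
    set β : ℝ := Real.exp 1 * Real.log 2 with hβ
    set K : ℝ := 2 * Nd * c ^ 2 * T / β with hK
    have hlog2 : (0:ℝ) < Real.log 2 := Real.log_pos one_lt_two
    have hβpos : 0 < β := mul_pos (Real.exp_pos 1) hlog2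
    have hβlt2 : β < 2 := by
      have h1 := Real.exp_one_lt_d9
      have h2 := Real.log_two_lt_d9
      have h3 := Real.exp_pos 1
      have h4 := hlog2
      nlinarith
    have hc1 : (1:ℝ) ≤ c := by rw [hc]; exact_mod_cast hcS
    have hT1 : (1:ℝ) ≤ (T:ℝ) := by exact_mod_cast hT
    have hNd1 : (1:ℝ) ≤ (Nd:ℝ) := by exact_mod_cast hNd
    have hK1 : (1:ℝ) ≤ K := by
      rw [hK, le_div_iff₀ hβpos, one_mul]
      have hc2 : (1:ℝ) ≤ c ^ 2 := by nlinarith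
      have hNc : (1:ℝ) ≤ (Nd:ℝ) * c ^ 2 := by nlinarith
      have h7 : (1:ℝ) ≤ (Nd:ℝ) * c ^ 2 * T := by nlinarith
      nlinarith [h7, hβlt2]
    have hlogK : 0 ≤ Real.log K := Real.log_nonneg hK1
    have hlogbK : 0 ≤ Real.logb 2 K := Real.logb_nonneg one_lt_two hK1
    rcases Nat.eq_zero_or_pos m with rfl | hm
    · simp only [Nat.cast_zero]
      positivity
    · -- shattering gives 2^m ≤ growth
      have huniv : (Set.univ : Set (Fin m → Bool)) ⊆ labelings (lossClassG F T) zs := by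
        intro v _
        obtain ⟨h, hh, hp⟩ := hshat v
        exact ⟨h, hh, fun i => (hp i).symm⟩
      have hcard : 2 ^ m ≤ (labelings (lossClassG F T) zs).ncard := by
        have := Set.ncard_le_ncard huniv (Set.toFinite _)
        rwa [Set.ncard_univ, Nat.card_eq_fintype_card, Fintype.card_fun, Fintype.card_bool,
          Fintype.card_fin] at this
      have hnat : 2 ^ m ≤ (Fintype.card S ^ 2 * m * T) ^ Nd :=
        le_trans hcard (labelings_card_le hT hm F hNdim zs)
      -- pass to the reals
      have hm1 : (1:ℝ) ≤ (m:ℝ) := by exact_mod_cast hm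
      have hmpos : (0:ℝ) < (m:ℝ) := by linarith
      have hcast : (2:ℝ) ^ m ≤ (c ^ 2 * m * T) ^ Nd := by
        have : ((2 ^ m : ℕ) : ℝ) ≤ (((Fintype.card S ^ 2 * m * T) ^ Nd : ℕ) : ℝ) := by
          exact_mod_cast hnat
        push_cast at this
        convert this using 2
      have hAm : (0:ℝ) < c ^ 2 * m * T := by positivity
      have hlogle : (m:ℝ) * Real.log 2 ≤ (Nd:ℝ) * Real.log (c ^ 2 * m * T) := by
        have := Real.log_le_log (by positivity) hcast
        rwa [Real.log_pow, Real.log_pow] at this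
      -- split the logarithm
      set z : ℝ := β * m / (2 * Nd) with hz
      have hzpos : 0 < z := by
        rw [hz]
        positivity
      have hKz : K * z = c ^ 2 * m * T := by
        rw [hK, hz]
        field_simp
      have hlogz : Real.log z ≤ Real.log 2 * m / (2 * Nd) := by
        have h1 : Real.log z ≤ z / Real.exp 1 := by
          have h2 := Real.log_le_sub_one_of_pos (show 0 < z / Real.exp 1 by positivity)
          rw [Real.log_div (ne_of_gt hzpos) (Real.exp_ne_zero 1), Real.log_exp] at h2
          linarith
        have h3 : z / Real.exp 1 = Real.log 2 * m / (2 * Nd) := by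
          rw [hz, hβ]
          field_simp
        linarith [h3 ▸ h1]
      have hsplit : Real.log (c ^ 2 * m * T) = Real.log K + Real.log z := by
        rw [← hKz, Real.log_mul (by linarith) (ne_of_gt hzpos)]
      have hNdz : (Nd:ℝ) * (Real.log 2 * m / (2 * Nd)) = Real.log 2 * m / 2 := by
        field_simp
      have hmain : (m:ℝ) * Real.log 2 / 2 ≤ (Nd:ℝ) * Real.log K := by
        have h4 : (Nd:ℝ) * Real.log z ≤ Real.log 2 * m / 2 := by
          calc (Nd:ℝ) * Real.log z ≤ (Nd:ℝ) * (Real.log 2 * m / (2 * Nd)) := by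
                apply mul_le_mul_of_nonneg_left hlogz (by linarith)
            _ = Real.log 2 * m / 2 := hNdz
        have h5 : (m:ℝ) * Real.log 2 ≤ (Nd:ℝ) * Real.log K + (Nd:ℝ) * Real.log z := by
          rw [← mul_add]
          rw [hsplit] at hlogle
          exact hlogle
        linarith
      -- conclude
      rw [show (3:ℝ) * Nd * Real.logb 2 K = (3 * Nd * Real.log K) / Real.log 2 from by
        rw [Real.logb]; ring, le_div_iff₀ hlog2]
      nlinarith [mul_nonneg (le_trans zero_le_one hNd1) hlogK]
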